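/- arXiv:1007.5124 — 2 statements merged into one kernel-verified Lean document; each statement's English description precedes it below -/
import Mathlib

section
/- Let 𝒪 be an order in an imaginary quadratic field M and 𝔞 a fractional 𝒪-ideal. The following are equivalent: (1) 𝔞 is projective as an 𝒪-module; (2) 𝔞 is locally principal, i.e. for every prime l the localization 𝔞_l is a principal 𝒪_l-ideal; (3) 𝔞 is a proper 𝒪-ideal, i.e. 𝒪 = {α ∈ M : α𝔞 ⊆ 𝔞}. -/
set_option synthInstance.maxHeartbeats 1000000
set_option maxHeartbeats 2000000
set_option linter.unusedSectionVars false
open Submodule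

section Aux

variable {M : Type*} [Field M] [NumberField M]
variable {O : Subalgebra ℤ M} {a : Submodule O M}

/-- Invertibility data for a fractional ideal: a finite family of elements of `a`
together with "inverse" elements multiplying `a` into `O`, with total sum 1. -/
def InvData (O : Subalgebra ℤ M) (a : Submodule O M) : Prop :=
  ∃ (t : Finset ↥a) (y : ↥a → M),
    (∀ w ∈ t, ∀ z ∈ a, y w * z ∈ O) ∧ (∑ w ∈ t, (w : M) * y w) = 1

lemma mul_mem_of_mem (o : O) {z : M} (hz : z ∈ a) : (o : M) * z ∈ a := by
  have := a.smul_mem o hz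
  rwa [Algebra.smul_def o z] at this

lemma exists_int_smul_mem (hOspan : Submodule.span ℚ (O : Set M) = ⊤) (m : M) :
    ∃ N : ℤ, N ≠ 0 ∧ N • m ∈ O := by
  have hm : m ∈ Submodule.span ℚ (O : Set M) := by rw [hOspan]; trivial
  induction hm using Submodule.span_induction with
  | mem x hx => exact ⟨1, one_ne_zero, by simpa using hx⟩
  | zero => exact ⟨1, one_ne_zero, by simpa using O.zero_mem⟩
  | add x y _ _ hx hy =>
      obtain ⟨N, hN, hNx⟩ := hx
      obtain ⟨K, hK, hKy⟩ := hy
      refine ⟨N * K, mul_ne_zero hN hK, ?_⟩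
      have : (N * K) • (x + y) = K • (N • x) + N • (K • y) := by
        rw [smul_add]; rw [← mul_smul, ← mul_smul, mul_comm]
      rw [this]
      exact add_mem (zsmul_mem hNx K) (zsmul_mem hKy N)
  | smul q x _ hx =>
      obtain ⟨N, hN, hNx⟩ := hx
      refine ⟨(q.den : ℤ) * N, mul_ne_zero (Int.natCast_ne_zero.mpr q.den_nz) hN, ?_⟩
      have h1 : ((q.den : ℤ) * N) • (q • x) = q.num • (N • x) := by
        rw [← Int.cast_smul_eq_zsmul ℚ ((q.den : ℤ) * N) (q • x), smul_smul,
          ← mul_smul, ← Int.cast_smul_eq_zsmul ℚ (q.num * N) x]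
        congr 1
        push_cast
        rw [mul_assoc, mul_comm ((N:ℚ)) q, ← mul_assoc, mul_comm ((q.den:ℚ)) q,
          Rat.mul_den_eq_num]
      rw [h1]
      exact zsmul_mem hNx q.num

lemma exists_denom_pair (hOspan : Submodule.span ℚ (O : Set M) = ⊤) (z z₀ : M) (hz₀ : z₀ ≠ 0) :
    ∃ (p : O) (N : ℤ), N ≠ 0 ∧ (N : M) * z = (p : M) * z₀ := by
  obtain ⟨N, hN, hmem⟩ := exists_int_smul_mem hOspan (z * z₀⁻¹)
  refine ⟨⟨N • (z * z₀⁻¹), hmem⟩, N, hN, ?_⟩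
  push_cast
  rw [zsmul_eq_mul]
  field_simp

lemma InvData.locallyPrincipal (h : InvData O a) (P : Ideal O) (hP : P.IsMaximal) :
    ∃ x ∈ a, ∀ y ∈ a, ∃ o s : O, s ∉ P ∧ s • y = o • x := by
  classical
  obtain ⟨t, y, hy, hsum⟩ := h
  have hmem : ∀ w ∈ t, (w : M) * y w ∈ O := fun w hw => by
    rw [mul_comm]; exact hy w hw _ w.2
  set g : ↥a → O := fun w => if h : (w : M) * y w ∈ O then ⟨_, h⟩ else 0 with hg
  have hgc : ∀ w ∈ t, ((g w : O) : M) = (w : M) * y w := fun w hw => by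
    simp only [hg, dif_pos (hmem w hw)]
  have hsum' : (∑ w ∈ t, g w) = 1 := by
    apply Subtype.coe_injective
    push_cast
    rw [Finset.sum_congr rfl hgc, hsum]
  have hex : ∃ w ∈ t, g w ∉ P := by
    by_contra hc
    push_neg at hc
    have : (1 : O) ∈ P := hsum' ▸ Submodule.sum_mem P hc
    exact hP.ne_top ((Ideal.eq_top_iff_one P).mpr this)
  obtain ⟨w, hwt, hwP⟩ := hex
  refine ⟨(w : M), w.2, fun z hz => ?_⟩
  have hzy : z * y w ∈ O := by rw [mul_comm]; exact hy w hwt z hz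
  refine ⟨⟨z * y w, hzy⟩, g w, hwP, ?_⟩
  rw [Algebra.smul_def, Algebra.smul_def]
  show ((g w : O) : M) * z = (z * y w) * (w : M)
  rw [hgc w hwt]
  ring

lemma locPrin_proper (ha0 : a ≠ ⊥)
    (h : ∀ P : Ideal O, P.IsMaximal →
      ∃ x ∈ a, ∀ y ∈ a, ∃ o s : O, s ∉ P ∧ s • y = o • x) :
    {α : M | ∀ x ∈ a, α * x ∈ a} = (O : Set M) := by
  ext c
  simp only [Set.mem_setOf_eq, SetLike.mem_coe]
  constructor
  · intro hc
    set I : Ideal O :=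
      { carrier := {r : O | (r : M) * c ∈ O}
        add_mem' := fun {r r'} hr hr' => by
          simp only [Set.mem_setOf_eq] at *
          push_cast
          rw [add_mul]
          exact add_mem hr hr'
        zero_mem' := by
          show ((0 : O) : M) * c ∈ O
          simp only [ZeroMemClass.coe_zero, zero_mul]
          exact O.zero_mem
        smul_mem' := fun r' r hr => by
          simp only [Set.mem_setOf_eq] at *
          rw [smul_eq_mul]
          push_cast
          rw [mul_assoc]
          exact mul_mem r'.2 hr } with hI
    rcases eq_or_ne I ⊤ with hIt | hIt
    · have h1 : (1 : O) ∈ I := hIt ▸ trivial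
      have h2 : ((1 : O) : M) * c ∈ O := h1
      simpa using h2
    · exfalso
      obtain ⟨P, hP, hIP⟩ := Ideal.exists_le_maximal I hIt
      obtain ⟨x, hx, hgen⟩ := h P hP
      obtain ⟨y₀, hy₀a, hy₀⟩ := a.ne_bot_iff.mp ha0
      have hx0 : x ≠ 0 := by
        rintro rfl
        obtain ⟨o, s, hsP, hs⟩ := hgen y₀ hy₀a
        rw [smul_zero, Algebra.smul_def] at hs
        rcases mul_eq_zero.mp hs with h' | h'
        · exact hsP (by simpa using (show s = 0 from Subtype.coe_injective (by simpa using h')) ▸ P.zero_mem)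
        · exact hy₀ h'
      obtain ⟨o, s, hsP, hs⟩ := hgen (c * x) (hc x hx)
      rw [Algebra.smul_def, Algebra.smul_def] at hs
      have hso : (s : M) * c = (o : M) := by
        have : ((s : M) * c) * x = (o : M) * x := by rw [mul_assoc]; exact hs
        exact mul_right_cancel₀ hx0 this
      exact hsP (hIP (show s ∈ I from by simp only [hI, Submodule.mem_mk]; show (s:M) * c ∈ O; rw [hso]; exact o.2))
  · intro hc x hx
    exact mul_mem_of_mem ⟨c, hc⟩ hx

lemma InvData.projective (h : InvData O a) : Module.Projective O ↥a := by
  classical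
  obtain ⟨t, y, hy, hsum⟩ := h
  let i : ↥a →ₗ[O] (↥t → O) :=
    { toFun := fun z => fun w => ⟨y ↑w * ↑z, hy ↑w w.2 ↑z z.2⟩
      map_add' := fun z₁ z₂ => by
        funext w
        apply Subtype.ext
        show y ↑w * ((z₁ + z₂ : ↥a) : M) = y ↑w * ↑z₁ + y ↑w * ↑z₂
        rw [Submodule.coe_add]
        ring
      map_smul' := fun o z => by
        funext w
        apply Subtype.ext
        show y ↑w * ((o • z : ↥a) : M) = (o : M) * (y ↑w * (z : M))
        rw [Submodule.coe_smul, Algebra.smul_def]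
        show y ↑w * ((o : M) * (z : M)) = _
        ring }
  let s : (↥t → O) →ₗ[O] ↥a :=
    { toFun := fun f => ∑ w : ↥t, f w • ((w : ↥a))
      map_add' := fun f g => by
        simp only [Pi.add_apply, add_smul, Finset.sum_add_distrib]
      map_smul' := fun o f => by
        simp only [Pi.smul_apply, smul_assoc, RingHom.id_apply, Finset.smul_sum] }
  refine Module.Projective.of_split i s (LinearMap.ext fun z => Subtype.coe_injective ?_)
  show ((∑ w : ↥t, (⟨y ↑w * ↑z, hy ↑w w.2 ↑z z.2⟩ : O) • ((w : ↥a)) : ↥a) : M) = (z : M)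
  rw [AddSubmonoidClass.coe_finset_sum]
  have hterm : ∀ w : ↥t, (((⟨y ↑w * ↑z, hy ↑w w.2 ↑z z.2⟩ : O) • ((w : ↥a)) : ↥a) : M)
      = (z : M) * (((w : ↥a) : M) * y ↑w) := by
    intro w
    rw [Submodule.coe_smul, Algebra.smul_def]
    show (y ↑w * ↑z) * (((w : ↥a)) : M) = _
    ring
  rw [Finset.sum_congr rfl (fun w _ => hterm w), ← Finset.mul_sum,
    Finset.sum_coe_sort t (fun w => (↑w : M) * y w), hsum, mul_one]

lemma projective_invData (hOspan : Submodule.span ℚ (O : Set M) = ⊤) (ha0 : a ≠ ⊥)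
    (hp : Module.Projective O ↥a) : InvData O a := by
  classical
  obtain ⟨sec, hsec⟩ := Module.projective_def.mp hp
  obtain ⟨z₀, hz₀a, hz₀⟩ := a.ne_bot_iff.mp ha0
  set Z₀ : ↥a := ⟨z₀, hz₀a⟩ with hZ₀
  have key : ∀ (z : ↥a) (w : ↥a),
      ((sec Z₀ w : O) : M) * (z : M) = ((sec z w : O) : M) * z₀ := by
    intro z w
    obtain ⟨p, N, hN, hpz⟩ := exists_denom_pair hOspan (z : M) z₀ hz₀
    have hNO : (((N : O) : O) : M) = (N : M) := by push_cast; ring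
    have h1 : (N : O) • z = p • Z₀ := by
      apply Subtype.coe_injective
      show ((((N : O)) • z : ↥a) : M) = ((p • Z₀ : ↥a) : M)
      rw [Submodule.coe_smul, Submodule.coe_smul, Algebra.smul_def, Algebra.smul_def]
      show (((N : O)) : M) * (z : M) = (p : M) * z₀
      rw [hNO]
      exact hpz
    have h2 : (N : O) • (sec z w) = p • (sec Z₀ w) := by
      have h := congrArg (fun u => sec u w) h1
      simpa only [map_smul, Finsupp.smul_apply] using h
    have h3 : (N : M) * ((sec z w : O) : M) = (p : M) * ((sec Z₀ w : O) : M) := by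
      have h := congrArg (fun u : O => (u : M)) h2
      simp only [smul_eq_mul] at h
      push_cast at h
      exact h
    have hNM : (N : M) ≠ 0 := Int.cast_ne_zero.mpr hN
    apply mul_left_cancel₀ hNM
    calc (N:M) * (((sec Z₀ w : O):M) * z) = ((sec Z₀ w : O):M) * ((N:M) * z) := by ring
    _ = ((sec Z₀ w : O):M) * ((p:M) * z₀) := by rw [hpz]
    _ = ((p:M) * ((sec Z₀ w : O):M)) * z₀ := by ring
    _ = ((N:M) * ((sec z w : O):M)) * z₀ := by rw [← h3]
    _ = (N:M) * (((sec z w : O):M) * z₀) := by ring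
  refine ⟨(sec Z₀).support, fun w => ((sec Z₀ w : O) : M) * z₀⁻¹, ?_, ?_⟩
  · intro w hw z hz
    have hk := key ⟨z, hz⟩ w
    have heq : ((sec Z₀ w : O):M) * z₀⁻¹ * z = ((sec ⟨z,hz⟩ w : O) : M) := by
      field_simp
      linear_combination hk
    rw [heq]
    exact (sec ⟨z,hz⟩ w).2
  · have hlc := hsec Z₀
    have hsum : ∑ w ∈ (sec Z₀).support, ((sec Z₀ w : O) : M) * ((w : ↥a) : M) = z₀ := by
      have h := congrArg (fun u : ↥a => (u : M)) hlc
      rw [Finsupp.linearCombination_apply, Finsupp.sum] at h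
      simp only [id_eq] at h
      rw [AddSubmonoidClass.coe_finset_sum] at h
      rw [Finset.sum_congr rfl (fun w _ => by
        rw [Submodule.coe_smul, Algebra.smul_def]; rfl : ∀ w ∈ (sec Z₀).support,
          (((sec Z₀ w • w : ↥a)) : M) = ((sec Z₀ w : O) : M) * ((w : ↥a) : M))] at h
      exact h
    rw [Finset.sum_congr rfl (fun w _ => show ((w:↥a):M) * (((sec Z₀ w : O) : M) * z₀⁻¹)
      = (((sec Z₀ w : O) : M) * ((w:↥a):M)) * z₀⁻¹ from by ring), ← Finset.sum_mul, hsum]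
    field_simp

lemma span_rat_top (hOspan : Submodule.span ℚ (O : Set M) = ⊤) (ha0 : a ≠ ⊥) :
    Submodule.span ℚ (a : Set M) = ⊤ := by
  obtain ⟨y₀, hy₀a, hy₀⟩ := a.ne_bot_iff.mp ha0
  rw [eq_top_iff]
  rintro m -
  have h1 : m * y₀⁻¹ ∈ Submodule.span ℚ (O : Set M) := by rw [hOspan]; trivial
  let L : M →ₗ[ℚ] M := LinearMap.mulRight ℚ y₀
  have h2 : L (m * y₀⁻¹) ∈ Submodule.map L (Submodule.span ℚ (O : Set M)) :=
    Submodule.mem_map_of_mem h1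
  rw [Submodule.map_span] at h2
  have h3 : L (m * y₀⁻¹) = m := by
    show m * y₀⁻¹ * y₀ = m
    field_simp
  rw [h3] at h2
  refine Submodule.span_mono ?_ h2
  rintro - ⟨o, ho, rfl⟩
  show (o * y₀ : M) ∈ (a : Set M)
  exact mul_mem_of_mem ⟨o, ho⟩ hy₀a

lemma proper_invData (hdeg : Module.finrank ℚ M = 2)
    (hOfg : (Subalgebra.toSubmodule O).FG) (hOspan : Submodule.span ℚ (O : Set M) = ⊤)
    (ha0 : a ≠ ⊥) (hafg : a.FG)
    (hproper : {α : M | ∀ x ∈ a, α * x ∈ a} = (O : Set M)) : InvData O a := by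
  classical
  haveI hOfin : Module.Finite ℤ ↥O := Module.Finite.iff_fg.mpr hOfg
  haveI hafin : Module.Finite ↥O ↥a := Module.Finite.iff_fg.mpr hafg
  haveI : Module.Finite ℤ ↥a := Module.Finite.trans ↥O ↥a
  haveI : NoZeroSMulDivisors ℤ ↥a := by
    constructor
    intro n z h
    have h2 : (n : ℤ) • (z : M) = 0 := by
      rw [← Submodule.coe_smul_of_tower n z, h]
      simp
    rcases smul_eq_zero.mp h2 with h' | h'
    · exact Or.inl h'
    · exact Or.inr (Subtype.coe_injective (by simpa using h'))
  haveI : Module.Free ℤ ↥a := Module.free_of_finite_type_torsion_free'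
  set ι := Module.Free.ChooseBasisIndex ℤ ↥a with hι
  let bb : Module.Basis ι ℤ ↥a := Module.Free.chooseBasis ℤ ↥a
  let v : ι → M := fun i => ((bb i : ↥a) : M)
  let jmap : ↥a →ₗ[ℤ] M :=
    { toFun := fun z => (z : M)
      map_add' := fun _ _ => rfl
      map_smul' := fun n z => Submodule.coe_smul_of_tower n z }
  have hvℤ : LinearIndependent ℤ v := by
    have h := bb.linearIndependent.map' jmap
      (LinearMap.ker_eq_bot.mpr (fun x y hxy => Subtype.coe_injective hxy))
    exact h
  have hvℚ : LinearIndependent ℚ v := (LinearIndependent.iff_fractionRing ℤ ℚ).mp hvℤ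
  have hsp : Submodule.span ℚ (Set.range v) = ⊤ := by
    rw [eq_top_iff, ← span_rat_top hOspan ha0, Submodule.span_le]
    intro z hz
    have h := congrArg (fun u : ↥a => (u : M)) (bb.sum_repr ⟨z, hz⟩)
    simp only at h
    rw [AddSubmonoidClass.coe_finset_sum] at h
    rw [Finset.sum_congr rfl (fun i _ => (show ((bb.repr ⟨z,hz⟩ i • bb i : ↥a) : M)
      = bb.repr ⟨z,hz⟩ i • v i from Submodule.coe_smul_of_tower _ _))] at h
    show z ∈ Submodule.span ℚ (Set.range v)
    rw [← h]
    refine Submodule.sum_mem _ fun i _ => ?_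
    rw [← Int.cast_smul_eq_zsmul ℚ]
    exact Submodule.smul_mem _ _ (Submodule.subset_span ⟨i, rfl⟩)
  let bv : Module.Basis ι ℚ M := Module.Basis.mk hvℚ (by rw [hsp])
  have hcard : Fintype.card ι = 2 := by
    rw [← Module.finrank_eq_card_basis bv, hdeg]
  let e : ι ≃ Fin 2 := Fintype.equivFinOfCardEq hcard
  let b2 : Module.Basis (Fin 2) ℤ ↥a := bb.reindex e
  set α : M := ((b2 0 : ↥a) : M) with hαdef
  set β : M := ((b2 1 : ↥a) : M) with hβdef
  have hα : α ∈ a := (b2 0).2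
  have hβ : β ∈ a := (b2 1).2
  have hdecomp : ∀ z ∈ a, ∃ m n : ℤ, z = m • α + n • β := by
    intro z hz
    refine ⟨b2.repr ⟨z, hz⟩ 0, b2.repr ⟨z, hz⟩ 1, ?_⟩
    have h := congrArg (fun u : ↥a => (u : M)) (b2.sum_repr ⟨z, hz⟩)
    simp only at h
    rw [Fin.sum_univ_two] at h
    rw [show ((b2.repr ⟨z,hz⟩ 0 • b2 0 + b2.repr ⟨z,hz⟩ 1 • b2 1 : ↥a) : M)
      = b2.repr ⟨z,hz⟩ 0 • α + b2.repr ⟨z,hz⟩ 1 • β from by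
        rw [Submodule.coe_add, Submodule.coe_smul_of_tower, Submodule.coe_smul_of_tower]] at h
    exact h.symm
  have hw2 : LinearIndependent ℚ (fun j : Fin 2 => ((b2 j : ↥a) : M)) := by
    have h := hvℚ.comp e.symm e.symm.injective
    convert h using 1
    funext j
    show ((b2 j : ↥a) : M) = v (e.symm j)
    rw [show b2 j = bb (e.symm j) from bb.reindex_apply e j]
  have hind : ∀ q r : ℚ, q • α + r • β = 0 → q = 0 ∧ r = 0 := by
    intro q r h
    have h2 := Fintype.linearIndependent_iff.mp hw2 ![q, r] (by
      rw [Fin.sum_univ_two]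
      simpa using h)
    exact ⟨h2 0, h2 1⟩
  have hα0 : α ≠ 0 := by
    intro h
    have := (hind 1 0 (by rw [h]; simp)).1
    norm_num at this
  have hαβ : α ≠ β := by
    intro h
    have := (hind 1 (-1) (by rw [h]; simp)).1
    norm_num at this
  have hspan2 : Submodule.span ℚ (Set.range (fun j : Fin 2 => ((b2 j : ↥a) : M))) = ⊤ := by
    have hre : Set.range (fun j : Fin 2 => ((b2 j : ↥a) : M)) = Set.range v := by
      rw [show (fun j : Fin 2 => ((b2 j : ↥a) : M)) = v ∘ ⇑e.symm from funext fun j => by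
        show ((b2 j : ↥a) : M) = v (e.symm j)
        rw [show b2 j = bb (e.symm j) from bb.reindex_apply e j]]
      rw [Set.range_comp, e.symm.surjective.range_eq, Set.image_univ]
    rw [hre, hsp]
  have hmem2 : β * β * α⁻¹ ∈ Submodule.span ℚ
      (Set.range (fun j : Fin 2 => ((b2 j : ↥a) : M))) := by rw [hspan2]; trivial
  obtain ⟨c, hc⟩ := (mem_span_range_iff_exists_fun (R := ℚ)).mp hmem2
  rw [Fin.sum_univ_two] at hc
  have hrel : β * β = (c 0 : M) * (α * α) + (c 1 : M) * (α * β) := by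
    have h1 : β * β = (β * β * α⁻¹) * α := by field_simp
    rw [h1, ← hc, Rat.smul_def, Rat.smul_def]
    ring
  -- integer relation
  set p : ℚ := c 0 with hp
  set q : ℚ := c 1 with hq
  set A₀ : ℤ := (p.den : ℤ) * (q.den : ℤ) with hA₀def
  set B₀ : ℤ := -(q.num * (p.den : ℤ)) with hB₀def
  set C₀ : ℤ := -(p.num * (q.den : ℤ)) with hC₀def
  have hA₀ : A₀ ≠ 0 := by
    rw [hA₀def]
    exact mul_ne_zero (Int.natCast_ne_zero.mpr p.den_nz) (Int.natCast_ne_zero.mpr q.den_nz)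
  have e1 : ((A₀ : ℚ)) * p = ((p.num * (q.den : ℤ) : ℤ) : ℚ) := by
    rw [hA₀def]
    push_cast
    rw [mul_comm ((p.den:ℚ)) ((q.den:ℚ)), mul_assoc, mul_comm ((p.den:ℚ)) p, Rat.mul_den_eq_num]
    ring
  have e2 : ((A₀ : ℚ)) * q = ((q.num * (p.den : ℤ) : ℤ) : ℚ) := by
    rw [hA₀def]
    push_cast
    rw [mul_assoc, mul_comm ((q.den:ℚ)) q, Rat.mul_den_eq_num]
    ring
  have e1M : (A₀ : M) * ((p : ℚ) : M) = (p.num : M) * ((q.den : ℕ) : M) := by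
    have h := congrArg (fun u : ℚ => (u : M)) e1
    push_cast at h
    exact h
  have e2M : (A₀ : M) * ((q : ℚ) : M) = (q.num : M) * ((p.den : ℕ) : M) := by
    have h := congrArg (fun u : ℚ => (u : M)) e2
    push_cast at h
    exact h
  have hB₀M : (B₀ : M) = -((q.num : M) * ((p.den : ℕ) : M)) := by
    rw [hB₀def]; push_cast; ring
  have hC₀M : (C₀ : M) = -((p.num : M) * ((q.den : ℕ) : M)) := by
    rw [hC₀def]; push_cast; ring
  have hrelM : (A₀ : M) * (β * β) + (B₀ : M) * (α * β) + (C₀ : M) * (α * α) = 0 := by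
    linear_combination (A₀ : M) * hrel + (α * α) * e1M + (α * β) * e2M
      + (α * β) * hB₀M + (α * α) * hC₀M
  -- gcd / Bezout
  set G : ℤ := (Int.gcd ((Int.gcd A₀ B₀ : ℤ)) C₀ : ℤ) with hGdef
  have hdAB : (G : ℤ) ∣ (Int.gcd A₀ B₀ : ℤ) := Int.gcd_dvd_left _ _
  have hdA : G ∣ A₀ := hdAB.trans (Int.gcd_dvd_left _ _)
  have hdB : G ∣ B₀ := hdAB.trans (Int.gcd_dvd_right _ _)
  have hdC : G ∣ C₀ := Int.gcd_dvd_right _ _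
  have hG0 : G ≠ 0 := by
    intro h
    exact hA₀ (zero_dvd_iff.mp (h ▸ hdA))
  set cA : ℤ := A₀ / G with hcAdef
  set cB : ℤ := B₀ / G with hcBdef
  set cC : ℤ := C₀ / G with hcCdef
  have hcAeq : G * cA = A₀ := Int.mul_ediv_cancel' hdA
  have hcBeq : G * cB = B₀ := Int.mul_ediv_cancel' hdB
  have hcCeq : G * cC = C₀ := Int.mul_ediv_cancel' hdC
  have hcA0 : cA ≠ 0 := by
    intro h
    exact hA₀ (by rw [← hcAeq, h, mul_zero])
  have hGM : (G : M) ≠ 0 := Int.cast_ne_zero.mpr hG0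
  have hrelM' : (cA : M) * (β * β) + (cB : M) * (α * β) + (cC : M) * (α * α) = 0 := by
    have hGA : (G : M) * (cA : M) = (A₀ : M) := by exact_mod_cast congrArg (fun n : ℤ => (n : M)) hcAeq
    have hGB : (G : M) * (cB : M) = (B₀ : M) := by exact_mod_cast congrArg (fun n : ℤ => (n : M)) hcBeq
    have hGC : (G : M) * (cC : M) = (C₀ : M) := by exact_mod_cast congrArg (fun n : ℤ => (n : M)) hcCeq
    have h : (G : M) * ((cA : M) * (β * β) + (cB : M) * (α * β) + (cC : M) * (α * α)) = 0 := by
      linear_combination hrelM + (β * β) * hGA + (α * β) * hGB + (α * α) * hGC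
    rcases mul_eq_zero.mp h with h' | h'
    · exact absurd h' hGM
    · exact h'
  obtain ⟨bu, bv, bw, hbez⟩ : ∃ bu bv bw : ℤ, cA * bu + cB * bv + cC * bw = 1 := by
    refine ⟨Int.gcdA A₀ B₀ * Int.gcdA ((Int.gcd A₀ B₀ : ℤ)) C₀,
      Int.gcdB A₀ B₀ * Int.gcdA ((Int.gcd A₀ B₀ : ℤ)) C₀,
      Int.gcdB ((Int.gcd A₀ B₀ : ℤ)) C₀, ?_⟩
    have hb1 := Int.gcd_eq_gcd_ab A₀ B₀
    have hb2 := Int.gcd_eq_gcd_ab ((Int.gcd A₀ B₀ : ℤ)) C₀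
    rw [← hGdef] at hb2
    apply mul_left_cancel₀ hG0
    rw [mul_one]
    linear_combination (Int.gcdA A₀ B₀ * Int.gcdA ((Int.gcd A₀ B₀ : ℤ)) C₀) * hcAeq
      + (Int.gcdB A₀ B₀ * Int.gcdA ((Int.gcd A₀ B₀ : ℤ)) C₀) * hcBeq
      + (Int.gcdB ((Int.gcd A₀ B₀ : ℤ)) C₀) * hcCeq
      - (Int.gcdA ((Int.gcd A₀ B₀ : ℤ)) C₀) * hb1 - hb2
  -- the inverse elements
  set γ : M := (cA : M) * β * α⁻¹ with hγdef
  set y₁ : M := (cA : M) * α⁻¹ with hy₁def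
  set y₂ : M := ((cB : M) + γ) * α⁻¹ with hy₂def
  have hy₁α : y₁ * α = (cA : M) := by rw [hy₁def]; field_simp
  have hy₁β : y₁ * β = γ := by rw [hy₁def, hγdef]; ring
  have hγα : γ * α = (cA : M) * β := by rw [hγdef]; field_simp
  have hγβ : γ * β = -((cB : M) * β) - (cC : M) * α := by
    apply mul_right_cancel₀ hα0
    calc γ * β * α = (γ * α) * β := by ring
    _ = (cA : M) * β * β := by rw [hγα]
    _ = (-((cB : M) * β) - (cC : M) * α) * α := by linear_combination hrelM'
  have hy₂α : y₂ * α = (cB : M) + γ := by rw [hy₂def]; field_simp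
  have hy₂β : y₂ * β = -(cC : M) := by
    apply mul_right_cancel₀ hα0
    calc y₂ * β * α = (y₂ * α) * β := by ring
    _ = ((cB : M) + γ) * β := by rw [hy₂α]
    _ = (cB : M) * β + γ * β := by ring
    _ = -(cC : M) * α := by rw [hγβ]; ring
  have hsmul_coe : ∀ (n : ℤ) (x : M), (n • x) = (n : M) * x := fun n x => by
    rw [zsmul_eq_mul]
  have hγmem : γ ∈ O := by
    have hmul : γ ∈ {x : M | ∀ z ∈ a, x * z ∈ a} := by
      intro z hz
      obtain ⟨m, n, rfl⟩ := hdecomp z hz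
      rw [show γ * (m • α + n • β) = m • (γ * α) + n • (γ * β) from by
        rw [mul_add, mul_smul_comm, mul_smul_comm], hγα, hγβ]
      refine add_mem (zsmul_mem ?_ m) (zsmul_mem ?_ n)
      · rw [← hsmul_coe]; exact zsmul_mem hβ cA
      · refine sub_mem (neg_mem ?_) ?_
        · rw [← hsmul_coe]; exact zsmul_mem hβ cB
        · rw [← hsmul_coe]; exact zsmul_mem hα cC
    rw [hproper] at hmul
    exact hmul
  have hy₁mem : ∀ z ∈ a, y₁ * z ∈ O := by
    intro z hz
    obtain ⟨m, n, rfl⟩ := hdecomp z hz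
    rw [show y₁ * (m • α + n • β) = m • (y₁ * α) + n • (y₁ * β) from by
      rw [mul_add, mul_smul_comm, mul_smul_comm], hy₁α, hy₁β]
    exact add_mem (zsmul_mem (intCast_mem O cA) m) (zsmul_mem hγmem n)
  have hy₂mem : ∀ z ∈ a, y₂ * z ∈ O := by
    intro z hz
    obtain ⟨m, n, rfl⟩ := hdecomp z hz
    rw [show y₂ * (m • α + n • β) = m • (y₂ * α) + n • (y₂ * β) from by
      rw [mul_add, mul_smul_comm, mul_smul_comm], hy₂α, hy₂β]
    exact add_mem (zsmul_mem (add_mem (intCast_mem O cB) hγmem) m)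
      (zsmul_mem (neg_mem (intCast_mem O cC)) n)
  -- assemble the invertibility data
  set w₁ : ↥a := ⟨α, hα⟩ with hw₁def
  set w₂ : ↥a := ⟨β, hβ⟩ with hw₂def
  have hw : w₁ ≠ w₂ := fun h => hαβ (congrArg Subtype.val h)
  refine ⟨{w₁, w₂}, fun w => if w = w₁ then (bu : M) * y₁ + (bv : M) * y₂
    else -((bv : M) * y₁) - (bw : M) * y₂, ?_, ?_⟩
  · intro w hwt z hz
    rcases Finset.mem_insert.mp hwt with rfl | h2
    · beta_reduce
      rw [if_pos rfl, add_mul]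
      refine add_mem ?_ ?_
      · rw [mul_assoc]; exact mul_mem (intCast_mem O bu) (hy₁mem z hz)
      · rw [mul_assoc]; exact mul_mem (intCast_mem O bv) (hy₂mem z hz)
    · rw [Finset.mem_singleton.mp h2]
      beta_reduce
      rw [if_neg (Ne.symm hw), sub_mul, neg_mul]
      refine sub_mem (neg_mem ?_) ?_
      · rw [mul_assoc]; exact mul_mem (intCast_mem O bv) (hy₁mem z hz)
      · rw [mul_assoc]; exact mul_mem (intCast_mem O bw) (hy₂mem z hz)
  · rw [Finset.sum_pair hw]
    beta_reduce
    rw [if_pos rfl, if_neg (Ne.symm hw)]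
    have hbezM : (cA : M) * (bu : M) + (cB : M) * (bv : M) + (cC : M) * (bw : M) = 1 := by
      exact_mod_cast congrArg (fun n : ℤ => (n : M)) hbez
    show α * ((bu : M) * y₁ + (bv : M) * y₂) + β * (-((bv : M) * y₁) - (bw : M) * y₂) = 1
    linear_combination (bu : M) * hy₁α + (bv : M) * hy₂α - (bv : M) * hy₁β
      - (bw : M) * hy₂β + hbezM

end Aux

/-- Let `𝒪` be an order of an imaginary quadratic field `M` and `𝔞` a fractional
`𝒪`-ideal (a nonzero finitely generated `𝒪`-submodule of `M`). The following are
equivalent: (1) `𝔞` is projective as an `𝒪`-module; (2) `𝔞` is locally principal, i.e.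
its localization at every maximal ideal of `𝒪` is principal (generated by one element up
to denominators outside the maximal ideal); (3) `𝔞` is a proper `𝒪`-ideal, i.e.
`𝒪 = {α ∈ M : α𝔞 ⊆ 𝔞}`. -/
theorem fractional_ideal_projective_iff_locally_principal_iff_proper
    (M : Type*) [Field M] [NumberField M]
    (hdeg : Module.finrank ℚ M = 2) (him : ∀ _ : M →+* ℝ, False)
    (O : Subalgebra ℤ M) (hOfg : (Subalgebra.toSubmodule O).FG)
    (hOspan : Submodule.span ℚ (O : Set M) = ⊤)
    (a : Submodule O M) (ha0 : a ≠ ⊥) (hafg : a.FG) :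
    (Module.Projective O a ↔
        ∀ P : Ideal O, P.IsMaximal →
          ∃ x ∈ a, ∀ y ∈ a, ∃ o s : O, s ∉ P ∧ s • y = o • x) ∧
      ((∀ P : Ideal O, P.IsMaximal →
          ∃ x ∈ a, ∀ y ∈ a, ∃ o s : O, s ∉ P ∧ s • y = o • x) ↔
        {α : M | ∀ x ∈ a, α * x ∈ a} = (O : Set M)) := by
  refine ⟨⟨fun hp => (projective_invData hOspan ha0 hp).locallyPrincipal, fun hlp =>
      (proper_invData hdeg hOfg hOspan ha0 hafg (locPrin_proper ha0 hlp)).projective⟩,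
    ⟨locPrin_proper ha0, fun hprop =>
      (proper_invData hdeg hOfg hOspan ha0 hafg hprop).locallyPrincipal⟩⟩
end

section
/- Let μ be a W-valued p-adic measure on ℤ_p with power series Φ_μ(t), and let φ : ℤ/p^nℤ → W be any function, regarded as a locally constant function on ℤ_p. Then the measure φ·μ (defined by ∫ ψ d(φμ) = ∫ ψ(x)φ(x) dμ(x)) has power series Φ_{φμ}(t) = p^{−n} Σ_{b ∈ ℤ/p^nℤ} φ(b) Σ_{ζ ∈ μ_{p^n}} ζ^{−b} Φ_μ(ζ t), where μ_{p^n} denotes the group of p^n-th roots of unity (and W is assumed to contain them). -/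
open Finset

private lemma pow_mod_of_pow_eq_one' {W : Type*} [Monoid W] {x : W} {m : ℕ}
    (h : x ^ m = 1) (a : ℕ) : x ^ a = x ^ (a % m) := by
  conv_lhs => rw [← Nat.div_add_mod a m]
  rw [pow_add, pow_mul, h, one_pow, one_mul]

private lemma zmod_pow_val_add' {W : Type*} [Monoid W] {x : W} {m : ℕ} [NeZero m]
    (h : x ^ m = 1) (u v : ZMod m) :
    x ^ (u + v).val = x ^ u.val * x ^ v.val := by
  rw [ZMod.val_add, ← pow_mod_of_pow_eq_one' h, pow_add]

private lemma sum_prim_root' {W : Type*} [CommRing W] [IsDomain W] {ζ : W} {m : ℕ}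
    [NeZero m] (hζ : IsPrimitiveRoot ζ m) (c : ZMod m) :
    ∑ j : ZMod m, ζ ^ (j * c).val = if c = 0 then (m : W) else 0 := by
  by_cases hc : c = 0
  · simp [hc, ZMod.card]
  · rw [if_neg hc]
    have h1 : ∀ j : ZMod m, ζ ^ (j * c).val = (ζ ^ c.val) ^ j.val := by
      intro j
      rw [mul_comm j c, ZMod.val_mul, ← pow_mod_of_pow_eq_one' hζ.pow_eq_one, pow_mul]
    simp_rw [h1]
    have h2 : ∑ j : ZMod m, (ζ ^ c.val) ^ j.val = ∑ i ∈ range m, (ζ ^ c.val) ^ i := by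
      refine Finset.sum_nbij' (fun j => j.val) (fun i => (i : ZMod m)) ?_ ?_ ?_ ?_ ?_
      · intro a _; exact Finset.mem_range.2 (ZMod.val_lt a)
      · intro a _; exact Finset.mem_univ _
      · intro a _; exact ZMod.natCast_rightInverse a
      · intro a ha; exact ZMod.val_cast_of_lt (Finset.mem_range.1 ha)
      · intro a _; rfl
    rw [h2]
    have hx1 : ζ ^ c.val ≠ 1 := by
      refine hζ.pow_ne_one_of_pos_of_lt ?_ (ZMod.val_lt c)
      exact fun (h : c.val = 0) => hc (by simpa [ZMod.val_eq_zero] using h)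
    have hxm : (ζ ^ c.val) ^ m = 1 := by
      rw [← pow_mul, mul_comm, pow_mul, hζ.pow_eq_one, one_pow]
    have := geom_sum_mul (ζ ^ c.val) m
    rw [hxm, sub_self] at this
    rcases mul_eq_zero.mp this with h | h
    · exact h
    · exact absurd (sub_eq_zero.mp h) hx1

/-- Let `μ` be a `W`-valued `p`-adic measure on `ℤ_p` with power series `Φ_μ(t)`, and let
`φ : ℤ/pⁿℤ → W` be any function, regarded as a locally constant function on `ℤ_p`. Then
the measure `φ·μ` has power series
`Φ_{φμ}(t) = p^{−n} Σ_{b} φ(b) Σ_{ζ ∈ μ_{pⁿ}} ζ^{−b} Φ_μ(ζt)` (stated with the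
denominator `pⁿ` cleared). The substituted series `Φ_μ(ζ^j t)` is encoded via its
binomial coefficients: its `k`-th coefficient is `∫ ζ^{jx}·binom(x,k) dμ(x)`, where
`ζ^{jx}` is the continuous function `e j`. -/
theorem powerSeries_of_twisted_measure
    (p n : ℕ) [Fact p.Prime] (W : Type*) [NormedCommRing W] [CompleteSpace W]
    [IsDomain W] [IsDiscreteValuationRing W]
    (hna : IsNonarchimedean (norm : W → ℝ)) (hball : ∀ x : W, ‖x‖ ≤ 1)
    (hp : ‖((p : ℕ) : W)‖ < 1)
    (binom : ℕ → C(ℤ_[p], W))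
    (hbinom : ∀ n' k : ℕ, binom n' ((k : ℕ) : ℤ_[p]) = ((Nat.choose k n' : ℕ) : W))
    (ζ : W) (hζ : IsPrimitiveRoot ζ (p ^ n))
    (φ : ZMod (p ^ n) → W)
    (φc : C(ℤ_[p], W)) (hφc : ∀ x : ℤ_[p], φc x = φ (PadicInt.toZModPow n x))
    (e : ZMod (p ^ n) → C(ℤ_[p], W))
    (he : ∀ (j : ZMod (p ^ n)) (x : ℤ_[p]), e j x = ζ ^ (j * PadicInt.toZModPow n x).val)
    (μ ν : C(ℤ_[p], W) →L[W] W)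
    (hν : ∀ ψ : C(ℤ_[p], W), ν ψ = μ (φc * ψ)) :
    ∀ k : ℕ,
      ((p : W) ^ n) * ν (binom k) =
        ∑ b : ZMod (p ^ n), ∑ j : ZMod (p ^ n),
          φ b * ζ ^ ((-(b * j) : ZMod (p ^ n)).val) * μ (e j * binom k) := by
  intro k
  have hm : 0 < p ^ n := pow_pos (Fact.out (p := p.Prime)).pos n
  haveI : NeZero (p ^ n) := ⟨hm.ne'⟩
  have hfun : ∑ b : ZMod (p ^ n), ∑ j : ZMod (p ^ n),
      (φ b * ζ ^ ((-(b * j) : ZMod (p ^ n)).val)) • (e j * binom k)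
      = ((p : W) ^ n) • (φc * binom k) := by
    ext x
    set y := PadicInt.toZModPow n x with hy
    simp only [ContinuousMap.coe_sum, ContinuousMap.coe_smul, Finset.sum_apply,
      Pi.smul_apply, ContinuousMap.mul_apply, smul_eq_mul, he]
    have step : ∀ b j : ZMod (p ^ n),
        φ b * ζ ^ ((-(b * j) : ZMod (p ^ n)).val) * (ζ ^ (j * y).val * binom k x)
        = (φ b * binom k x) * ζ ^ (j * (y - b)).val := by
      intro b j
      have : (j * (y - b) : ZMod (p ^ n)) = -(b * j) + j * y := by ring
      rw [this, zmod_pow_val_add' hζ.pow_eq_one]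
      ring
    rw [← hy]
    simp_rw [step, ← Finset.mul_sum, sum_prim_root' hζ]
    simp_rw [sub_eq_zero, mul_ite, mul_zero, Finset.sum_ite_eq Finset.univ y, Finset.mem_univ,
      if_true]
    rw [hφc, ← hy]
    push_cast
    ring
  calc ((p : W) ^ n) * ν (binom k)
      = μ (((p : W) ^ n) • (φc * binom k)) := by rw [hν, map_smul, smul_eq_mul]
    _ = ∑ b : ZMod (p ^ n), ∑ j : ZMod (p ^ n),
          φ b * ζ ^ ((-(b * j) : ZMod (p ^ n)).val) * μ (e j * binom k) := by
        rw [← hfun, map_sum]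
        refine Finset.sum_congr rfl fun b _ => ?_
        rw [map_sum]
        exact Finset.sum_congr rfl fun j _ => by rw [map_smul, smul_eq_mul]
end
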